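/- Let T ≥ 1, let K ∈ ℝⁿˣⁿ, and let the (T+1)-mode tensor K̂ ∈ ℝ^{n^{T+1}} have entries K̂_{i₀,…,i_T} = Π_{t=1}^{T} K_{i_{t−1}, i_t}. Let u₀,…,u_T ∈ ℝⁿ and U be the tensor with entries U_{i₀,…,i_T} = Π_{t=0}^{T} (u_t)_{i_t}. Then the projection of K̂ ⊙ U onto the t-th marginal, defined by P_t(M)_j = Σ_{i₀,…,i_{t−1},i_{t+1},…,i_T} M_{i₀,…,i_{t−1},j,i_{t+1},…,i_T}, equals the entrywise product of three vectors: (u₀ᵀ K diag(u₁) K ⋯ K diag(u_{t−1}) K)ᵀ, u_t, and K diag(u_{t+1}) K ⋯ K diag(u_{T−1}) K u_T. -/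

import Mathlib

open Matrix

/-- Left factor: `leftVec K u t = (u₀ᵀ K diag(u₁) K ⋯ K diag(u_{t−1}) K)ᵀ`,
the all-ones vector for `t = 0`. -/
noncomputable def leftVec {n : ℕ} (K : Matrix (Fin n) (Fin n) ℝ) (u : ℕ → Fin n → ℝ) :
    ℕ → Fin n → ℝ
  | 0 => fun _ => 1
  | k + 1 => Kᵀ.mulVec fun i => u k i * leftVec K u k i

/-- Right factor (counting from the end): `rightAux K u T (T − t)` equals
`K diag(u_{t+1}) K ⋯ K diag(u_{T−1}) K u_T`, and is the all-ones vector for `t = T`. -/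
noncomputable def rightAux {n : ℕ} (K : Matrix (Fin n) (Fin n) ℝ) (u : ℕ → Fin n → ℝ)
    (T : ℕ) : ℕ → Fin n → ℝ
  | 0 => fun _ => 1
  | m + 1 => K.mulVec fun i => u (T - m) i * rightAux K u T m i

/-- marginal projection of the sequentially structured tensor
`K̂ ⊙ U`, where `K̂_{i₀,…,i_T} = ∏_{t=1}^T K_{i_{t−1} i_t}` and
`U_{i₀,…,i_T} = ∏_t (u_t)_{i_t}`, equals the entrywise product of the left chain,
`u_t`, and the right chain. -/
lemma rightAux_shift {n : ℕ} (K : Matrix (Fin n) (Fin n) ℝ) (u u' : ℕ → Fin n → ℝ)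
    (h : ∀ s, 1 ≤ s → u' s = u (s+1)) (T : ℕ) :
    ∀ m, m ≤ T → rightAux K u' T m = rightAux K u (T+1) m := by
  intro m
  induction m with
  | zero => intro _; rfl
  | succ m ih =>
    intro hm
    have h2 : T - m + 1 = T + 1 - m := by omega
    show Matrix.mulVec K _ = Matrix.mulVec K _
    funext i
    rw [h _ (by omega), h2, ih (by omega)]

lemma leftVec_mul {n : ℕ} (K : Matrix (Fin n) (Fin n) ℝ) (u u' : ℕ → Fin n → ℝ)
    (h0 : u' 0 = fun y => u 1 y * leftVec K u 1 y)
    (h : ∀ s, 1 ≤ s → u' s = u (s+1)) :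
    ∀ k, (fun y => u' k y * leftVec K u' k y) = fun y => u (k+1) y * leftVec K u (k+1) y := by
  intro k
  induction k with
  | zero => funext y; simp [leftVec, h0]
  | succ k ih =>
    funext y
    have h3 : leftVec K u' (k+1) = leftVec K u (k+2) := by
      show Matrix.mulVec Kᵀ (fun i => u' k i * leftVec K u' k i) = _
      rw [ih]
      rfl
    rw [h3, h _ (by omega)]

lemma key {n : ℕ} (K : Matrix (Fin n) (Fin n) ℝ) :
    ∀ (T : ℕ) (u : ℕ → Fin n → ℝ) (t : Fin (T + 1)) (j : Fin n),
    (∑ i : Fin (T + 1) → Fin n,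
        if i t = j then
          (∏ s : Fin T, K (i s.castSucc) (i s.succ)) * ∏ s : Fin (T + 1), u s.val (i s)
        else 0)
      = leftVec K u t.val j * u t.val j * rightAux K u T (T - t.val) j := by
  intro T
  induction T with
  | zero =>
    intro u t j
    have ht : t = 0 := Fin.ext (by omega)
    subst ht
    rw [← Equiv.sum_comp (Equiv.funUnique (Fin 1) (Fin n)).symm]
    simp [leftVec, rightAux, Finset.sum_ite_eq']
  | succ T ih =>
    intro u t j
    rw [← Equiv.sum_comp (Fin.consEquiv fun _ => Fin n), Fintype.sum_prod_type]
    simp only [Fin.consEquiv_apply, Fin.cons_succ, Fin.prod_univ_succ, Fin.cons_zero,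
      Fin.val_succ, Fin.castSucc_zero, ← Fin.succ_castSucc, Fin.val_zero]
    refine Fin.cases ?_ ?_ t
    · -- t = 0
      simp only [Fin.cons_zero, Fin.val_zero, Nat.sub_zero]
      set u'' : ℕ → Fin n → ℝ := fun s => u (s+1) with hu''
      have h1 : ∀ s, 1 ≤ s → u'' s = u (s+1) := fun s _ => rfl
      have hinner : ∀ y : Fin n,
          (∑ i' : Fin (T + 1) → Fin n,
            if i' 0 = y then (∏ s : Fin T, K (i' s.castSucc) (i' s.succ)) *
              ∏ s : Fin (T + 1), u'' s.val (i' s) else 0)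
          = u 1 y * rightAux K u'' T T y := by
        intro y
        rw [ih u'' 0 y]
        simp [leftVec, hu'']
      have hsplit : ∀ i' : Fin (T + 1) → Fin n,
          (∏ s : Fin (T + 1), u'' s.val (i' s))
            = u 1 (i' 0) * ∏ s : Fin T, u (s.val + 1 + 1) (i' s.succ) := by
        intro i'
        rw [Fin.prod_univ_succ]
        rfl
      have pull : ∀ x : Fin n, (∑ i' : Fin (T + 1) → Fin n, if x = j then
            (K x (i' 0) * ∏ s : Fin T, K (i' s.castSucc) (i' s.succ)) *
              (u 0 x * (u (0 + 1) (i' 0) * ∏ s : Fin T, u (s.val + 1 + 1) (i' s.succ))) else 0)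
          = if x = j then (∑ i' : Fin (T + 1) → Fin n,
            (K x (i' 0) * ∏ s : Fin T, K (i' s.castSucc) (i' s.succ)) *
              (u 0 x * (u (0 + 1) (i' 0) * ∏ s : Fin T, u (s.val + 1 + 1) (i' s.succ)))) else 0 := by
        intro x; split_ifs <;> simp
      rw [Finset.sum_congr rfl fun x _ => pull x, Finset.sum_ite_eq' Finset.univ j]
      simp only [Finset.mem_univ, if_true]
      have expand : ∀ i' : Fin (T + 1) → Fin n,
          (K j (i' 0) * ∏ s : Fin T, K (i' s.castSucc) (i' s.succ)) *
              (u 0 j * (u (0 + 1) (i' 0) * ∏ s : Fin T, u (s.val + 1 + 1) (i' s.succ)))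
          = ∑ y : Fin n, u 0 j * (K j y * (if i' 0 = y then
              (∏ s : Fin T, K (i' s.castSucc) (i' s.succ)) *
                ∏ s : Fin (T + 1), u'' s.val (i' s) else 0)) := by
        intro i'
        have h2 : ∀ y : Fin n, u 0 j * (K j y * (if i' 0 = y then
              (∏ s : Fin T, K (i' s.castSucc) (i' s.succ)) *
                ∏ s : Fin (T + 1), u'' s.val (i' s) else 0))
            = if i' 0 = y then u 0 j * (K j y * ((∏ s : Fin T, K (i' s.castSucc) (i' s.succ)) *
                ∏ s : Fin (T + 1), u'' s.val (i' s))) else 0 := by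
          intro y; split_ifs <;> simp
        rw [Finset.sum_congr rfl fun y _ => h2 y, Finset.sum_ite_eq, if_pos (Finset.mem_univ _),
          hsplit i']
        ring
      rw [Finset.sum_congr rfl fun i' _ => expand i', Finset.sum_comm]
      simp only [← Finset.mul_sum]
      rw [Finset.sum_congr rfl fun y _ => by rw [hinner y]]
      have hT1 : T + 1 - T = 1 := by omega
      have hsh : rightAux K u'' T T = rightAux K u (T+1) T :=
        rightAux_shift K u u'' h1 T T le_rfl
      show _ = leftVec K u 0 j * u 0 j * Matrix.mulVec K _ j
      simp only [leftVec, hT1, hsh, one_mul, Matrix.mulVec, dotProduct]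
    · -- t = t'.succ
      intro t'
      simp only [Fin.cons_succ, Fin.val_succ]
      set u' : ℕ → Fin n → ℝ :=
        fun s => if s = 0 then (fun y => u 1 y * leftVec K u 1 y) else u (s+1) with hu'
      have h0 : u' 0 = fun y => u 1 y * leftVec K u 1 y := rfl
      have h1 : ∀ s, 1 ≤ s → u' s = u (s+1) := by
        intro s hs; have hne : s ≠ 0 := by omega
        simp [hu', hne]
      have hkey : ∀ i' : Fin (T+1) → Fin n,
          (∑ x : Fin n, (K x (i' 0) * ∏ s : Fin T, K (i' s.castSucc) (i' s.succ)) *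
            (u 0 x * (u 1 (i' 0) * ∏ s : Fin T, u (s.val + 1 + 1) (i' s.succ))))
          = (∏ s : Fin T, K (i' s.castSucc) (i' s.succ)) *
              ∏ s : Fin (T + 1), u' s.val (i' s) := by
        intro i'
        rw [Fin.prod_univ_succ (f := fun s : Fin (T+1) => u' s.val (i' s))]
        have e1 : u' (0 : Fin (T+1)).val (i' 0) = u 1 (i' 0) * ∑ x, u 0 x * K x (i' 0) := by
          simp [hu', leftVec, Matrix.mulVec, dotProduct, Matrix.transpose_apply, mul_comm]
        have e2 : ∀ s : Fin T, u' (s.succ.val) (i' s.succ) = u (s.val+1+1) (i' s.succ) := by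
          intro s; simp [hu']
        rw [e1, Finset.prod_congr rfl (fun s _ => e2 s)]
        simp only [Finset.mul_sum, Finset.sum_mul]
        refine Finset.sum_congr rfl fun x _ => ?_
        ring
      rw [Finset.sum_comm]
      have step : ∀ i' : Fin (T+1) → Fin n,
          (∑ x : Fin n, if i' t' = j then
            (K x (i' 0) * ∏ s : Fin T, K (i' s.castSucc) (i' s.succ)) *
              (u 0 x * (u 1 (i' 0) * ∏ s : Fin T, u (s.val + 1 + 1) (i' s.succ))) else 0)
          = if i' t' = j then (∏ s : Fin T, K (i' s.castSucc) (i' s.succ)) *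
              ∏ s : Fin (T + 1), u' s.val (i' s) else 0 := by
        intro i'
        by_cases hc : i' t' = j
        · simp only [hc, if_true]; exact hkey i'
        · simp [hc]
      rw [Finset.sum_congr rfl fun i' _ => step i']
      rw [ih u' t' j]
      have hl := congrFun (leftVec_mul K u u' h0 h1 t'.val) j
      have hr : rightAux K u' T (T - t'.val) = rightAux K u (T+1) (T - t'.val) :=
        rightAux_shift K u u' h1 T _ (by omega)
      have hs : T + 1 - (t'.val + 1) = T - t'.val := by omega
      rw [hs, ← hr, mul_comm (leftVec K u' t'.val j), hl,
        mul_comm (u (t'.val + 1) j)]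


theorem stmt5 {n T : ℕ} (hT : 1 ≤ T) (K : Matrix (Fin n) (Fin n) ℝ)
    (u : ℕ → Fin n → ℝ) (t : Fin (T + 1)) (j : Fin n) :
    (∑ i : Fin (T + 1) → Fin n,
        if i t = j then
          (∏ s : Fin T, K (i s.castSucc) (i s.succ)) * ∏ s : Fin (T + 1), u s.val (i s)
        else 0)
      = leftVec K u t.val j * u t.val j * rightAux K u T (T - t.val) j := by
  exact key K T u t j
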